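/- Let G be a finite group containing an abelian subgroup A of index n. Then G contains a normal abelian subgroup of index at most n². -/

import Mathlib

open Pointwise

/-- The Chermak–Delgado index-measure of a subgroup `H` of `G`:
`m(G,H) = |G:H| * |G:C_G(H)|`. -/
noncomputable def cdMeasure {G : Type*} [Group G] (H : Subgroup G) : ℕ :=
  H.index * (Subgroup.centralizer (H : Set G)).index

/-- `μ(G)`, the minimum of `m(G,H)` over all subgroups `H ≤ G`. -/
noncomputable def cdMu (G : Type*) [Group G] : ℕ :=
  sInf {n : ℕ | ∃ H : Subgroup G, cdMeasure H = n}

/-- A subgroup `H ≤ G` is a CD-subgroup if `m(G,H) = μ(G)`. -/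
def IsCDSubgroup {G : Type*} [Group G] (H : Subgroup G) : Prop :=
  cdMeasure H = cdMu G

section CD

variable {G : Type*} [Group G] [Finite G]

lemma index_pos' (H : Subgroup G) : 0 < H.index :=
  Nat.pos_of_ne_zero H.index_ne_zero_of_finite

lemma index_le_of_le' {H K : Subgroup G} (h : H ≤ K) : K.index ≤ H.index :=
  Nat.le_of_dvd (index_pos' H) (Subgroup.index_dvd_of_le h)

lemma cdMeasure_pos (H : Subgroup G) : 0 < cdMeasure H :=
  Nat.mul_pos (index_pos' H) (index_pos' _)

lemma cdMu_le (H : Subgroup G) : cdMu G ≤ cdMeasure H :=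
  Nat.sInf_le ⟨H, rfl⟩

lemma exists_cd : ∃ H : Subgroup G, IsCDSubgroup H := by
  have h : cdMu G ∈ {n : ℕ | ∃ H : Subgroup G, cdMeasure H = n} :=
    Nat.sInf_mem ⟨cdMeasure (⊤ : Subgroup G), ⊤, rfl⟩
  exact h

lemma cdMu_pos : 0 < cdMu G := by
  obtain ⟨H, hH⟩ := exists_cd (G := G)
  exact hH ▸ cdMeasure_pos H

/-- `H ≤ C(C(H))`. -/
lemma le_centralizer_centralizer' (H : Subgroup G) :
    H ≤ Subgroup.centralizer ((Subgroup.centralizer (H : Set G) : Subgroup G) : Set G) :=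
  Subgroup.le_centralizer_iff.mpr le_rfl

/-- If `H` is a CD-subgroup, then so is its centralizer. -/
lemma isCD_centralizer {H : Subgroup G} (hH : IsCDSubgroup H) :
    IsCDSubgroup (Subgroup.centralizer (H : Set G)) := by
  have h1 : (Subgroup.centralizer ((Subgroup.centralizer (H : Set G) : Subgroup G) : Set G)).index
      ≤ H.index := index_le_of_le' (le_centralizer_centralizer' H)
  have h2 : cdMeasure (Subgroup.centralizer (H : Set G)) ≤ cdMeasure H := by
    unfold cdMeasure
    calc (Subgroup.centralizer (H : Set G)).index *
          (Subgroup.centralizer ((Subgroup.centralizer (H : Set G) : Subgroup G) : Set G)).index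
        ≤ (Subgroup.centralizer (H : Set G)).index * H.index :=
          Nat.mul_le_mul_left _ h1
      _ = H.index * (Subgroup.centralizer (H : Set G)).index := Nat.mul_comm _ _
  exact le_antisymm (hH ▸ h2) (cdMu_le _)

/-- key index inequality: if `X, Y ≤ Z` then `|G:X∩Y| * |G:Z| ≤ |G:X| * |G:Y|`. -/
lemma index_inf_mul_index_le {X Y Z : Subgroup G} (hX : X ≤ Z) (hY : Y ≤ Z) :
    (X ⊓ Y).index * Z.index ≤ X.index * Y.index := by
  have h1 : (X ⊓ Y).relIndex Z * Z.index = (X ⊓ Y).index :=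
    Subgroup.relIndex_mul_index (inf_le_left.trans hX)
  have h2 : X.relIndex Z * Z.index = X.index := Subgroup.relIndex_mul_index hX
  have h3 : Y.relIndex Z * Z.index = Y.index := Subgroup.relIndex_mul_index hY
  have h4 : (X ⊓ Y).relIndex Z ≤ X.relIndex Z * Y.relIndex Z := Subgroup.relIndex_inf_le
  calc (X ⊓ Y).index * Z.index = (X ⊓ Y).relIndex Z * Z.index * Z.index := by rw [h1]
    _ ≤ X.relIndex Z * Y.relIndex Z * Z.index * Z.index :=
        Nat.mul_le_mul_right _ (Nat.mul_le_mul_right _ h4)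
    _ = (X.relIndex Z * Z.index) * (Y.relIndex Z * Z.index) := by ring
    _ = X.index * Y.index := by rw [h2, h3]

lemma centralizer_sup (H K : Subgroup G) :
    Subgroup.centralizer ((H ⊔ K : Subgroup G) : Set G)
      = Subgroup.centralizer (H : Set G) ⊓ Subgroup.centralizer (K : Set G) := by
  apply le_antisymm
  · exact le_inf
      (Subgroup.centralizer_le (SetLike.coe_subset_coe.mpr le_sup_left))
      (Subgroup.centralizer_le (SetLike.coe_subset_coe.mpr le_sup_right))
  · rw [← Subgroup.le_centralizer_iff]
    refine sup_le ?_ ?_ <;> rw [Subgroup.le_centralizer_iff]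
    · exact inf_le_left
    · exact inf_le_right

/-- The intersection of two CD-subgroups is a CD-subgroup. -/
lemma isCD_inf {H K : Subgroup G} (hH : IsCDSubgroup H) (hK : IsCDSubgroup K) :
    IsCDSubgroup (H ⊓ K) := by
  set CH := Subgroup.centralizer (H : Set G) with hCH
  set CK := Subgroup.centralizer (K : Set G) with hCK
  set J := H ⊔ K with hJ
  set D := Subgroup.centralizer (J : Set G) with hD
  have hDinf : D = CH ⊓ CK := centralizer_sup H K
  -- first inequality
  have e1 : (H ⊓ K).index * J.index ≤ H.index * K.index :=
    index_inf_mul_index_le le_sup_left le_sup_right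
  -- centralizer of H ⊓ K contains CH ⊔ CK
  have hLle : CH ⊔ CK ≤ Subgroup.centralizer ((H ⊓ K : Subgroup G) : Set G) := by
    refine sup_le ?_ ?_
    · exact Subgroup.centralizer_le (SetLike.coe_subset_coe.mpr inf_le_left)
    · exact Subgroup.centralizer_le (SetLike.coe_subset_coe.mpr inf_le_right)
  have e2a : (Subgroup.centralizer ((H ⊓ K : Subgroup G) : Set G)).index ≤ (CH ⊔ CK).index :=
    index_le_of_le' hLle
  have e2b : (CH ⊓ CK).index * (CH ⊔ CK).index ≤ CH.index * CK.index :=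
    index_inf_mul_index_le le_sup_left le_sup_right
  have e2 : (Subgroup.centralizer ((H ⊓ K : Subgroup G) : Set G)).index * D.index
      ≤ CH.index * CK.index := by
    calc (Subgroup.centralizer ((H ⊓ K : Subgroup G) : Set G)).index * D.index
        ≤ (CH ⊔ CK).index * D.index := Nat.mul_le_mul_right _ e2a
      _ = (CH ⊓ CK).index * (CH ⊔ CK).index := by rw [hDinf]; ring
      _ ≤ CH.index * CK.index := e2b
  -- combine
  have key : cdMeasure (H ⊓ K) * cdMeasure J ≤ cdMeasure H * cdMeasure K := by
    unfold cdMeasure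
    calc (H ⊓ K).index * (Subgroup.centralizer ((H ⊓ K : Subgroup G) : Set G)).index
          * (J.index * D.index)
        = ((H ⊓ K).index * J.index) *
            ((Subgroup.centralizer ((H ⊓ K : Subgroup G) : Set G)).index * D.index) := by ring
      _ ≤ (H.index * K.index) * (CH.index * CK.index) := Nat.mul_le_mul e1 e2
      _ = (H.index * CH.index) * (K.index * CK.index) := by ring
  have hle : cdMeasure (H ⊓ K) * cdMu G ≤ cdMu G * cdMu G := by
    calc cdMeasure (H ⊓ K) * cdMu G ≤ cdMeasure (H ⊓ K) * cdMeasure J :=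
          Nat.mul_le_mul_left _ (cdMu_le J)
      _ ≤ cdMeasure H * cdMeasure K := key
      _ = cdMu G * cdMu G := by rw [hH, hK]
  have : cdMeasure (H ⊓ K) ≤ cdMu G :=
    Nat.le_of_mul_le_mul_right hle (cdMu_pos)
  exact le_antisymm this (cdMu_le _)

lemma centralizer_map_equiv (e : G ≃* G) (s : Set G) :
    Subgroup.centralizer (e '' s) = (Subgroup.centralizer s).map e.toMonoidHom := by
  ext x
  simp only [Subgroup.mem_centralizer_iff, Subgroup.mem_map, MulEquiv.coe_toMonoidHom]
  constructor
  · intro hx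
    refine ⟨e.symm x, fun h hh => e.injective ?_, e.apply_symm_apply x⟩
    have := hx (e h) ⟨h, hh, rfl⟩
    simpa [map_mul] using this
  · rintro ⟨y, hy, rfl⟩ h ⟨h', hh', rfl⟩
    have := hy h' hh'
    rw [← map_mul, this, map_mul]

/-- Conjugates of CD-subgroups are CD-subgroups. -/
lemma isCD_conj {H : Subgroup G} (hH : IsCDSubgroup H) (g : G) :
    IsCDSubgroup (H.map (MulAut.conj g).toMonoidHom) := by
  have hker : (MulAut.conj g).toMonoidHom.ker ≤ H := by
    intro x hx
    have h0 : (MulAut.conj g) x = 1 := hx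
    have : x = 1 := by simpa using (MulAut.conj g).injective (by simpa using h0)
    exact this ▸ H.one_mem
  have hsurj : Function.Surjective (MulAut.conj g).toMonoidHom := (MulAut.conj g).surjective
  have h1 : (H.map (MulAut.conj g).toMonoidHom).index = H.index :=
    Subgroup.index_map_eq H hsurj hker
  have h2 : Subgroup.centralizer ((H.map (MulAut.conj g).toMonoidHom : Subgroup G) : Set G)
      = (Subgroup.centralizer (H : Set G)).map (MulAut.conj g).toMonoidHom := by
    rw [Subgroup.coe_map]
    exact centralizer_map_equiv (MulAut.conj g) (H : Set G)
  have hker2 : (MulAut.conj g).toMonoidHom.ker ≤ Subgroup.centralizer (H : Set G) := by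
    intro x hx
    have h0 : (MulAut.conj g) x = 1 := hx
    have : x = 1 := by simpa using (MulAut.conj g).injective (by simpa using h0)
    exact this ▸ Subgroup.one_mem _
  have h3 : ((Subgroup.centralizer (H : Set G)).map (MulAut.conj g).toMonoidHom).index
      = (Subgroup.centralizer (H : Set G)).index :=
    Subgroup.index_map_eq _ hsurj hker2
  unfold IsCDSubgroup cdMeasure at *
  rw [h1, h2, h3]
  exact hH

end CD

theorem stmt_10 {G : Type*} [Group G] [Finite G] (A : Subgroup G) (n : ℕ)
    (hA : IsMulCommutative A) (hn : A.index = n) :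
    ∃ N : Subgroup G, N.Normal ∧ IsMulCommutative N ∧ N.index ≤ n ^ 2 := by
  classical
  -- pick a CD-subgroup of minimal cardinality
  have hne : {k : ℕ | ∃ H : Subgroup G, IsCDSubgroup H ∧ Nat.card H = k}.Nonempty := by
    obtain ⟨H, hH⟩ := exists_cd (G := G)
    exact ⟨Nat.card H, H, hH, rfl⟩
  obtain ⟨N, hNcd, hNcard⟩ := Nat.sInf_mem hne
  have hmin : ∀ K : Subgroup G, IsCDSubgroup K → Nat.card N ≤ Nat.card K := by
    intro K hK
    rw [hNcard]
    exact Nat.sInf_le ⟨K, hK, rfl⟩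
  -- key: any CD-subgroup contained in N equals N
  have hkey : ∀ K : Subgroup G, IsCDSubgroup K → K ≤ N → K = N := by
    intro K hK hle
    exact Subgroup.eq_of_le_of_card_ge hle (hmin K hK)
  -- N is commutative
  have hcomm : IsMulCommutative N := by
    have h1 : IsCDSubgroup (N ⊓ Subgroup.centralizer (N : Set G)) :=
      isCD_inf hNcd (isCD_centralizer hNcd)
    have h2 : N ⊓ Subgroup.centralizer (N : Set G) = N := hkey _ h1 inf_le_left
    have h3 : N ≤ Subgroup.centralizer (N : Set G) := by
      have h4 : N ⊓ Subgroup.centralizer (N : Set G) ≤ Subgroup.centralizer (N : Set G) :=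
        inf_le_right
      rwa [h2] at h4
    exact Subgroup.le_centralizer_iff_isMulCommutative.mp h3
  -- N is normal
  have hnorm : N.Normal := by
    constructor
    intro x hx g
    have hcd : IsCDSubgroup (N.map (MulAut.conj g).toMonoidHom) := isCD_conj hNcd g
    have h1 : IsCDSubgroup (N ⊓ N.map (MulAut.conj g).toMonoidHom) := isCD_inf hNcd hcd
    have h2 : N ⊓ N.map (MulAut.conj g).toMonoidHom = N := hkey _ h1 inf_le_left
    have h3 : N ≤ N.map (MulAut.conj g).toMonoidHom := by
      have h4 : N ⊓ N.map (MulAut.conj g).toMonoidHom ≤ N.map (MulAut.conj g).toMonoidHom :=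
        inf_le_right
      rwa [h2] at h4
    have hcard : Nat.card (N.map (MulAut.conj g).toMonoidHom) = Nat.card N :=
      Nat.card_congr (Subgroup.equivMapOfInjective N _ (MulAut.conj g).injective).toEquiv.symm
    have h4 : N = N.map (MulAut.conj g).toMonoidHom :=
      Subgroup.eq_of_le_of_card_ge h3 hcard.le
    rw [h4]
    exact ⟨x, hx, rfl⟩
  -- index bound
  refine ⟨N, hnorm, hcomm, ?_⟩
  have hAC : A ≤ Subgroup.centralizer (A : Set G) := Subgroup.le_centralizer (h := hA)
  have h1 : (Subgroup.centralizer (A : Set G)).index ≤ A.index := index_le_of_le' hAC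
  have h2 : cdMeasure A ≤ n ^ 2 := by
    unfold cdMeasure
    calc A.index * (Subgroup.centralizer (A : Set G)).index ≤ A.index * A.index :=
          Nat.mul_le_mul_left _ h1
      _ = n ^ 2 := by rw [hn]; ring
  have h3 : N.index ≤ cdMeasure N := Nat.le_mul_of_pos_right _ (index_pos' _)
  calc N.index ≤ cdMeasure N := h3
    _ = cdMu G := hNcd
    _ ≤ cdMeasure A := cdMu_le A
    _ ≤ n ^ 2 := h2
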